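/- There exists a universal constant C > 0 with the following property. Let Ω be a finite set with full-support probability measure μ, and assume the product semigroup (P_t) on Ωⁿ is hypercontractive with constant ρ ∈ (0,1]. Then for every ε ∈ (0,1) and every f : Ωⁿ → ℝ with max_{1≤i≤n} ‖L_i f‖_∞ ≤ 1 and total influence I(f) ≥ 1, there exists a function g : Ωⁿ → ℝ depending on at most exp(C·I(f)·(1 + |log(ε ρ)|)/(ρ ε²)) coordinates such that ‖f − g‖_{L²(μ^{⊗n})} ≤ ε. -/

import Mathlib

set_option maxHeartbeats 1000000
set_option synthInstance.maxHeartbeats 400000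


open Finset

variable {Ω : Type} [Fintype Ω] {n : ℕ}

/-- The product weight of the product measure `μ^{⊗n}` on `Ωⁿ`. -/
def prodWeight (w : Ω → ℝ) (x : Fin n → Ω) : ℝ := ∏ i, w (x i)

/-- The operator `L_i f(x) = ∫_Ω f(x_1,…,y,…,x_n) dμ(y) − f(x)`, as a linear map. -/
noncomputable def Lcoord (w : Ω → ℝ) (i : Fin n) :
    ((Fin n → Ω) → ℝ) →ₗ[ℝ] ((Fin n → Ω) → ℝ) where
  toFun f := fun x => (∑ y, w y * f (Function.update x i y)) - f x
  map_add' f g := by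
    funext x
    simp [mul_add, Finset.sum_add_distrib]
    ring
  map_smul' c f := by
    funext x
    simp only [Pi.smul_apply, smul_eq_mul, RingHom.id_apply, mul_sub, Finset.mul_sum]
    congr 1
    exact Finset.sum_congr rfl fun y _ => by ring

/-- `L = Σ_i L_i`. -/
noncomputable def Ltot (w : Ω → ℝ) (n : ℕ) :
    ((Fin n → Ω) → ℝ) →ₗ[ℝ] ((Fin n → Ω) → ℝ) :=
  ∑ i : Fin n, Lcoord w i

/-- The semigroup `P_t = e^{tL}`. -/
noncomputable def Psemi (w : Ω → ℝ) (n : ℕ) (t : ℝ) : ((Fin n → Ω) → ℝ) → ((Fin n → Ω) → ℝ) :=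
  fun f => NormedSpace.exp (t • (LinearMap.toContinuousLinearMap (Ltot w n))) f

/-- `Π_T f` : the function obtained from `f` by integrating out the coordinates
in `T` against `μ`. -/
noncomputable def PiT (w : Ω → ℝ) (T : Finset (Fin n)) (f : (Fin n → Ω) → ℝ) :
    (Fin n → Ω) → ℝ :=
  fun x => ∑ y : { i // i ∈ T } → Ω, (∏ i : { i // i ∈ T }, w (y i)) *
    f (fun i => if h : i ∈ T then y ⟨i, h⟩ else x i)

/-- The `L¹(μ^{⊗n})` norm. -/
noncomputable def nrm1 (w : Ω → ℝ) (f : (Fin n → Ω) → ℝ) : ℝ :=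
  ∑ x, prodWeight w x * |f x|

/-- The square of the `L²(μ^{⊗n})` norm. -/
noncomputable def nrm2sq (w : Ω → ℝ) (f : (Fin n → Ω) → ℝ) : ℝ :=
  ∑ x, prodWeight w x * (f x) ^ 2

/-- The `L^p(μ^{⊗n})` norm. -/
noncomputable def nrmp (w : Ω → ℝ) (p : ℝ) (f : (Fin n → Ω) → ℝ) : ℝ :=
  (∑ x, prodWeight w x * |f x| ^ p) ^ (1 / p)

/-- The influence of coordinate `i` on `f` : `I_i(f) = ‖L_i f‖_{L¹(μ^{⊗n})}`. -/
noncomputable def influence (w : Ω → ℝ) (i : Fin n) (f : (Fin n → Ω) → ℝ) : ℝ :=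
  nrm1 w (Lcoord w i f)

/-! ### Kernel operators -/

/-- coefficient pair multiplication: `(a₁·I + a₂·E)(b₁·I + b₂·E)` -/
def Kmul (a b : ℝ × ℝ) : ℝ × ℝ := (a.1 * b.1, a.1 * b.2 + a.2 * b.1 + a.2 * b.2)

open scoped Classical in
/-- single-coordinate kernel for coefficient pair `c` -/
noncomputable def kern (w : Ω → ℝ) (c : ℝ × ℝ) (a b : Ω) : ℝ := (if b = a then c.1 else 0) + c.2 * w b

/-- the operator with product kernel given by coefficients `c i` -/
noncomputable def Kop (w : Ω → ℝ) (c : Fin n → ℝ × ℝ) (f : (Fin n → Ω) → ℝ) (x : Fin n → Ω) : ℝ :=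
  ∑ y : Fin n → Ω, (∏ i, kern w (c i) (x i) (y i)) * f y

/-- weighted inner product -/
def inn (w : Ω → ℝ) (f g : (Fin n → Ω) → ℝ) : ℝ :=
  ∑ x, prodWeight w x * (f x * g x)

variable {w : Ω → ℝ}

section basic

lemma kern_comp (hw1 : (∑ x, w x) = 1) (c d : ℝ × ℝ) (a e : Ω) :
    ∑ b, kern w c a b * kern w d b e = kern w (Kmul c d) a e := by
  classical
  simp only [kern, Kmul, add_mul, mul_add]
  rw [Finset.sum_add_distrib, Finset.sum_add_distrib, Finset.sum_add_distrib]
  have h1 : ∑ b, (if b = a then c.1 else 0) * (if e = b then d.1 else 0)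
      = (if e = a then c.1 * d.1 else 0) := by
    rw [Finset.sum_eq_single a]
    · by_cases h : e = a <;> simp [h]
    · intro b _ hb; simp [hb]
    · simp
  have h2 : ∑ b, (if b = a then c.1 else 0) * (d.2 * w e) = c.1 * (d.2 * w e) := by
    rw [Finset.sum_eq_single a]
    · simp
    · intro b _ hb; simp [hb]
    · simp
  have h3 : ∑ b, c.2 * w b * (if e = b then d.1 else 0) = c.2 * w e * d.1 := by
    rw [Finset.sum_eq_single e]
    · simp
    · intro b _ hb; simp [Ne.symm hb]
    · simp
  have h4 : ∑ b, c.2 * w b * (d.2 * w e) = c.2 * (d.2 * w e) := by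
    rw [← Finset.sum_mul]
    rw [show ∑ b, c.2 * w b = c.2 * ∑ b, w b by rw [Finset.mul_sum], hw1, mul_one]
  rw [h1, h2, h3, h4]
  ring

lemma Kop_id (f : (Fin n → Ω) → ℝ) (x : Fin n → Ω) :
    Kop w (fun _ => (1, 0)) f x = f x := by
  classical
  simp only [Kop, kern, mul_zero, zero_mul, add_zero]
  have : ∀ y : Fin n → Ω, (∏ i, if y i = x i then (1:ℝ) else 0) * f y
      = if y = x then f y else 0 := by
    intro y
    rw [Finset.prod_boole]
    by_cases h : y = x
    · simp [h]
    · have : ¬ ∀ i, y i = x i := fun hh => h (funext hh)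
      simp [this, h]
  rw [Finset.sum_congr rfl fun y _ => this y]
  simp

lemma Kop_comp (hw1 : (∑ x, w x) = 1) (c d : Fin n → ℝ × ℝ) (f : (Fin n → Ω) → ℝ)
    (x : Fin n → Ω) :
    Kop w c (Kop w d f) x = Kop w (fun i => Kmul (c i) (d i)) f x := by
  classical
  simp only [Kop, Finset.mul_sum]
  rw [Finset.sum_comm]
  refine Finset.sum_congr rfl fun y _ => ?_
  have : ∑ z : Fin n → Ω, (∏ i, kern w (c i) (x i) (z i)) * ((∏ i, kern w (d i) (z i) (y i)) * f y)
      = (∑ z : Fin n → Ω, ∏ i, (kern w (c i) (x i) (z i) * kern w (d i) (z i) (y i))) * f y := by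
    rw [Finset.sum_mul]
    refine Finset.sum_congr rfl fun z _ => ?_
    rw [Finset.prod_mul_distrib]; ring
  rw [this]
  congr 1
  have key : ∑ z : Fin n → Ω, ∏ i, (kern w (c i) (x i) (z i) * kern w (d i) (z i) (y i))
      = ∏ i, ∑ b, kern w (c i) (x i) b * kern w (d i) b (y i) := by
    rw [← Finset.sum_prod_piFinset, Fintype.piFinset_univ]
  rw [key]
  exact Finset.prod_congr rfl fun i _ => kern_comp hw1 _ _ _ _

/-- coefficient function of the projection `F_T` -/
noncomputable def cF (T : Finset (Fin n)) : Fin n → ℝ × ℝ :=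
  fun i => if i ∈ T then (1, -1) else (0, 1)

lemma Kop_decomp (f : (Fin n → Ω) → ℝ) (x : Fin n → Ω) :
    ∑ T ∈ (Finset.univ : Finset (Fin n)).powerset, Kop w (cF T) f x = f x := by
  classical
  rw [← Kop_id (w := w) f x]
  simp only [Kop]
  rw [Finset.sum_comm]
  refine Finset.sum_congr rfl fun y _ => ?_
  rw [← Finset.sum_mul]
  congr 1
  have hsplit : ∀ T ∈ (Finset.univ : Finset (Fin n)).powerset,
      (∏ i, kern w (cF T i) (x i) (y i))
        = (∏ i ∈ T, kern w (1,-1) (x i) (y i)) *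
          ∏ i ∈ Finset.univ \ T, kern w (0,1) (x i) (y i) := by
    intro T _
    rw [show (∏ i, kern w (cF T i) (x i) (y i))
        = ∏ i, (if i ∈ T then kern w (1,-1) (x i) (y i) else kern w (0,1) (x i) (y i)) from
      Finset.prod_congr rfl fun i _ => by by_cases h : i ∈ T <;> simp [cF, h]]
    rw [Finset.prod_ite]
    congr 1
    · exact Finset.prod_congr (by ext i; simp) fun _ _ => rfl
    · exact Finset.prod_congr (by ext i; simp [Finset.mem_sdiff]) fun _ _ => rfl
  rw [Finset.sum_congr rfl hsplit, ← Finset.prod_add]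
  refine Finset.prod_congr rfl fun i _ => ?_
  simp [kern]

lemma Kop_sub (c : Fin n → ℝ × ℝ) (f g : (Fin n → Ω) → ℝ) (x : Fin n → Ω) :
    Kop w c (fun y => f y - g y) x = Kop w c f x - Kop w c g x := by
  simp only [Kop, mul_sub, Finset.sum_sub_distrib]

lemma Kop_sum {α : Type*} (s : Finset α) (c : Fin n → ℝ × ℝ) (F : α → (Fin n → Ω) → ℝ)
    (x : Fin n → Ω) :
    Kop w c (fun y => ∑ a ∈ s, F a y) x = ∑ a ∈ s, Kop w c (F a) x := by
  simp only [Kop, Finset.mul_sum]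
  rw [Finset.sum_comm]

lemma Kop_smul (c : Fin n → ℝ × ℝ) (r : ℝ) (f : (Fin n → Ω) → ℝ) (x : Fin n → Ω) :
    Kop w c (fun y => r * f y) x = r * Kop w c f x := by
  simp only [Kop, Finset.mul_sum]
  exact Finset.sum_congr rfl fun y _ => by ring

/-- if some coordinate has coefficient `(0,0)` the operator vanishes -/
lemma Kop_zero {c : Fin n → ℝ × ℝ} {j : Fin n} (hj : c j = (0,0)) (f : (Fin n → Ω) → ℝ)
    (x : Fin n → Ω) : Kop w c f x = 0 := by
  classical
  simp only [Kop]
  refine Finset.sum_eq_zero fun y _ => ?_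
  rw [Finset.prod_eq_zero (Finset.mem_univ j) (by simp [kern, hj]), zero_mul]

/-- pull out scalar factors from the coefficients -/
lemma Kop_scale (c d : Fin n → ℝ × ℝ) (r : Fin n → ℝ) (h : ∀ i, c i = r i • d i)
    (f : (Fin n → Ω) → ℝ) (x : Fin n → Ω) :
    Kop w c f x = (∏ i, r i) * Kop w d f x := by
  classical
  simp only [Kop, Finset.mul_sum]
  refine Finset.sum_congr rfl fun y _ => ?_
  rw [← mul_assoc, ← Finset.prod_mul_distrib]
  congr 1
  refine Finset.prod_congr rfl fun i _ => ?_
  rw [h i]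
  by_cases hyx : y i = x i <;>
    simp only [kern, Prod.smul_def, smul_eq_mul, Prod.fst, Prod.snd, if_pos, if_neg, hyx,
      if_true, if_false, ite_true, ite_false] <;> ring

/-- self-adjointness of the kernel operators -/
lemma Kop_selfadj (c : Fin n → ℝ × ℝ) (f g : (Fin n → Ω) → ℝ) :
    inn w (Kop w c f) g = inn w f (Kop w c g) := by
  classical
  simp only [inn, Kop, Finset.sum_mul, Finset.mul_sum]
  rw [Finset.sum_comm]
  refine Finset.sum_congr rfl fun x _ => Finset.sum_congr rfl fun y _ => ?_
  have key : prodWeight w y * ∏ i, kern w (c i) (y i) (x i)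
      = prodWeight w x * ∏ i, kern w (c i) (x i) (y i) := by
    simp only [prodWeight, ← Finset.prod_mul_distrib]
    refine Finset.prod_congr rfl fun i _ => ?_
    simp only [kern, mul_add]
    by_cases h : x i = y i
    · rw [if_pos h, if_pos h.symm, h]; try ring
    · rw [if_neg h, if_neg (Ne.symm h)]; try ring
  calc prodWeight w y * ((∏ i, kern w (c i) (y i) (x i)) * f x * g y)
      = (prodWeight w y * ∏ i, kern w (c i) (y i) (x i)) * (f x * g y) := by ring
    _ = (prodWeight w x * ∏ i, kern w (c i) (x i) (y i)) * (f x * g y) := by rw [key]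
    _ = prodWeight w x * (f x * ((∏ i, kern w (c i) (x i) (y i)) * g y)) := by ring

/-- the kernel operator with a single nontrivial coordinate is the averaging operator -/
lemma Kop_avg (i : Fin n) (f : (Fin n → Ω) → ℝ) (x : Fin n → Ω) :
    Kop w (fun j => if j = i then (0,1) else (1,0)) f x
      = ∑ b, w b * f (Function.update x i b) := by
  classical
  simp only [Kop]
  have hterm : ∀ y : Fin n → Ω,
      (∏ j, kern w (if j = i then ((0:ℝ),(1:ℝ)) else (1,0)) (x j) (y j)) * f y
        = (if ∀ j, j ≠ i → y j = x j then w (y i) * f y else 0) := by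
    intro y
    have : (∏ j, kern w (if j = i then ((0:ℝ),(1:ℝ)) else (1,0)) (x j) (y j))
        = (w (y i)) * ∏ j ∈ Finset.univ.erase i, (if y j = x j then 1 else 0) := by
      rw [← Finset.mul_prod_erase Finset.univ _ (Finset.mem_univ i)]
      congr 1
      · simp [kern]
      · refine Finset.prod_congr rfl fun j hj => ?_
        have hji : j ≠ i := (Finset.mem_erase.mp hj).1
        simp [kern, hji]
    rw [this, Finset.prod_boole]
    by_cases h : ∀ j, j ≠ i → y j = x j
    · rw [if_pos h, if_pos (fun j hj => h j (Finset.mem_erase.mp hj).1)]; ring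
    · have hP : ¬ ∀ j ∈ Finset.univ.erase i, y j = x j :=
        fun hh => h fun j hj => hh j (Finset.mem_erase.mpr ⟨hj, Finset.mem_univ j⟩)
      rw [if_neg h, if_neg hP, mul_zero, zero_mul]
  rw [Finset.sum_congr rfl fun y _ => hterm y]
  rw [Finset.sum_ite, Finset.sum_const_zero, add_zero]
  refine Finset.sum_nbij' (fun y => y i) (fun b => Function.update x i b) ?_ ?_ ?_ ?_ ?_
  · intro y _; exact Finset.mem_univ _
  · intro b _
    simp only [Finset.mem_filter, Finset.mem_univ, true_and]
    intro j hj
    exact Function.update_of_ne hj b x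
  · intro y hy
    simp only [Finset.mem_filter, Finset.mem_univ, true_and] at hy
    funext j
    show Function.update x i (y i) j = y j
    by_cases hj : j = i
    · subst hj; simp
    · rw [Function.update_of_ne hj]
      exact (hy j hj).symm
  · intro b _
    show Function.update x i b i = b
    simp
  · intro y hy
    simp only [Finset.mem_filter, Finset.mem_univ, true_and] at hy
    have hupd : Function.update x i (y i) = y := by
      funext j
      by_cases hj : j = i
      · subst hj; simp
      · rw [Function.update_of_ne hj]
        exact (hy j hj).symm
    show w (y i) * f y = w (y i) * f (Function.update x i (y i))
    rw [hupd]

/-- `L_i` as a continuous linear map -/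
noncomputable def Lclm (w : Ω → ℝ) (i : Fin n) :
    ((Fin n → Ω) → ℝ) →L[ℝ] ((Fin n → Ω) → ℝ) :=
  LinearMap.toContinuousLinearMap (Lcoord w i)

lemma Lclm_apply (i : Fin n) (f : (Fin n → Ω) → ℝ) (x : Fin n → Ω) :
    Lclm w i f x = (∑ y, w y * f (Function.update x i y)) - f x := rfl

lemma Lcoord_comm (i j : Fin n) (f : (Fin n → Ω) → ℝ) (x : Fin n → Ω) :
    Lcoord w i (Lcoord w j f) x = Lcoord w j (Lcoord w i f) x := by
  rcases eq_or_ne i j with rfl | hij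
  · rfl
  have key : ∀ (a b : Fin n) (hab : a ≠ b),
      (∑ y, w y * ∑ z, w z * f (Function.update (Function.update x a y) b z))
      = ∑ y, w y * ∑ z, w z * f (Function.update (Function.update x b y) a z) := by
    intro a b hab
    simp_rw [Finset.mul_sum]
    rw [Finset.sum_comm]
    refine Finset.sum_congr rfl fun y _ => Finset.sum_congr rfl fun z _ => ?_
    rw [Function.update_comm hab]
    ring
  simp only [Lcoord, LinearMap.coe_mk, AddHom.coe_mk, mul_sub, Finset.sum_sub_distrib]
  rw [key i j hij]
  ring

lemma Lcoord_update (i : Fin n) (f : (Fin n → Ω) → ℝ) (x : Fin n → Ω) (b : Ω) :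
    ∑ y, w y * f (Function.update (Function.update x i b) i y)
      = ∑ y, w y * f (Function.update x i y) := by
  refine Finset.sum_congr rfl fun y _ => ?_
  rw [Function.update_idem]

lemma Lcoord_sq (hw1 : (∑ x, w x) = 1) (i : Fin n) (f : (Fin n → Ω) → ℝ) (x : Fin n → Ω) :
    Lcoord w i (Lcoord w i f) x = -(Lcoord w i f x) := by
  simp only [Lcoord, LinearMap.coe_mk, AddHom.coe_mk, mul_sub, Finset.sum_sub_distrib]
  have h1 : ∑ y, w y * ∑ z, w z * f (Function.update (Function.update x i y) i z)
      = ∑ z, w z * f (Function.update x i z) := by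
    have : ∀ y : Ω, ∑ z, w z * f (Function.update (Function.update x i y) i z)
        = ∑ z, w z * f (Function.update x i z) := fun y => Lcoord_update i f x y
    rw [Finset.sum_congr rfl fun y _ => by rw [this y]]
    rw [← Finset.sum_mul, hw1, one_mul]
  have h2 : ∑ y, w y * f (Function.update x i y) = ∑ y, w y * f (Function.update x i y) := rfl
  rw [h1]
  ring

lemma Lclm_commute (i j : Fin n) : Commute (Lclm w i) (Lclm w j) := by
  ext f x
  exact Lcoord_comm i j f x

lemma Lclm_sq (hw1 : (∑ x, w x) = 1) (i : Fin n) :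
    Lclm w i * Lclm w i = -(Lclm w i) := by
  ext f x
  exact Lcoord_sq hw1 i f x

lemma Lclm_pow (hw1 : (∑ x, w x) = 1) (i : Fin n) (k : ℕ) :
    Lclm w i ^ (k + 1) = ((-1 : ℝ)) ^ k • Lclm w i := by
  induction k with
  | zero => simp
  | succ k ih =>
    rw [pow_succ, ih, smul_mul_assoc, Lclm_sq hw1, smul_neg, pow_succ, mul_neg_one, ← neg_smul]

lemma exp_single (hw1 : (∑ x, w x) = 1) (t : ℝ) (i : Fin n) :
    NormedSpace.exp (t • Lclm w i) = 1 + (1 - Real.exp (-t)) • Lclm w i := by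
  have hpow : ∀ k : ℕ, (t • Lclm w i) ^ (k + 1) = (t ^ (k+1) * (-1:ℝ)^k) • Lclm w i := by
    intro k
    rw [smul_pow, Lclm_pow hw1, smul_smul]
  have hrw : NormedSpace.exp (t • Lclm w i)
      = ∑' k : ℕ, ((Nat.factorial k : ℕ) : ℝ)⁻¹ • (t • Lclm w i) ^ k := by
    rw [NormedSpace.exp_eq_tsum ℝ]
  rw [hrw, Summable.tsum_eq_zero_add (NormedSpace.expSeries_summable' (𝕂 := ℝ) (t • Lclm w i))]
  have h0 : ((Nat.factorial 0 : ℕ) : ℝ)⁻¹ • (t • Lclm w i) ^ 0 = 1 := by simp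
  rw [h0]
  congr 1
  set g : ℕ → ℝ := fun k => ((Nat.factorial k : ℕ) : ℝ)⁻¹ * (-t) ^ k with hgdef
  have hg : Summable g := by
    have := NormedSpace.expSeries_summable' (𝕂 := ℝ) (𝔸 := ℝ) (-t)
    simpa [smul_eq_mul] using this
  have hg1 : Summable fun k => g (k + 1) := (summable_nat_add_iff 1).2 hg
  have hterm : ∀ k : ℕ, ((Nat.factorial (k+1) : ℕ) : ℝ)⁻¹ • (t • Lclm w i) ^ (k + 1)
      = (-(g (k+1))) • Lclm w i := by
    intro k
    rw [hpow k, smul_smul]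
    congr 1
    simp only [hgdef]
    rw [show (-t) ^ (k+1) = (-1:ℝ)^(k+1) * t^(k+1) by rw [neg_pow]]
    rw [pow_succ]
    ring
  rw [tsum_congr hterm, Summable.tsum_smul_const hg1.neg]
  congr 1
  rw [tsum_neg]
  have hsum : ∑' k, g (k + 1) = Real.exp (-t) - 1 := by
    have h := Summable.tsum_eq_zero_add hg
    have hexp : ∑' k, g k = Real.exp (-t) := by
      rw [Real.exp_eq_exp_ℝ, NormedSpace.exp_eq_tsum ℝ]
      exact tsum_congr fun k => by simp [hgdef, smul_eq_mul]
    have hg0 : g 0 = 1 := by simp [hgdef]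
    rw [hexp, hg0] at h
    linarith
  rw [hsum]
  ring

lemma Kop_single (i : Fin n) (a b : ℝ) (f : (Fin n → Ω) → ℝ) (x : Fin n → Ω) :
    Kop w (fun j => if j = i then (a, b) else (1, 0)) f x
      = a * f x + b * ∑ y, w y * f (Function.update x i y) := by
  classical
  have hker : ∀ y : Fin n → Ω,
      (∏ j, kern w (if j = i then (a,b) else (1,0)) (x j) (y j))
        = a * (∏ j, kern w ((1:ℝ),(0:ℝ)) (x j) (y j))
          + b * ∏ j, kern w (if j = i then ((0:ℝ),(1:ℝ)) else (1,0)) (x j) (y j) := by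
    intro y
    rw [← Finset.mul_prod_erase Finset.univ
        (fun j => kern w (if j = i then (a,b) else (1,0)) (x j) (y j)) (Finset.mem_univ i),
      ← Finset.mul_prod_erase Finset.univ
        (fun j => kern w ((1:ℝ),(0:ℝ)) (x j) (y j)) (Finset.mem_univ i),
      ← Finset.mul_prod_erase Finset.univ
        (fun j => kern w (if j = i then ((0:ℝ),(1:ℝ)) else (1,0)) (x j) (y j))
        (Finset.mem_univ i)]
    have hrest : ∀ j ∈ Finset.univ.erase i,
        kern w (if j = i then ((a:ℝ),(b:ℝ)) else (1,0)) (x j) (y j)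
          = kern w ((1:ℝ),(0:ℝ)) (x j) (y j) := by
      intro j hj
      rw [if_neg (Finset.mem_erase.mp hj).1]
    have hrest' : ∀ j ∈ Finset.univ.erase i,
        kern w (if j = i then ((0:ℝ),(1:ℝ)) else (1,0)) (x j) (y j)
          = kern w ((1:ℝ),(0:ℝ)) (x j) (y j) := by
      intro j hj
      rw [if_neg (Finset.mem_erase.mp hj).1]
    rw [Finset.prod_congr rfl hrest, Finset.prod_congr rfl hrest']
    have : kern w (a, b) (x i) (y i)
        = a * kern w ((1:ℝ),(0:ℝ)) (x i) (y i) + b * kern w ((0:ℝ),(1:ℝ)) (x i) (y i) := by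
      simp [kern]; try ring
    rw [if_pos rfl, if_pos rfl] at *
    rw [this]
    ring
  simp only [Kop]
  rw [Finset.sum_congr rfl fun y _ => by rw [hker y]]
  simp only [add_mul, Finset.sum_add_distrib, mul_assoc, ← Finset.mul_sum]
  congr 1
  · rw [show (∑ y : Fin n → Ω, (∏ j, kern w ((1:ℝ),(0:ℝ)) (x j) (y j)) * f y) = f x from
      Kop_id f x]
  · rw [show (∑ y : Fin n → Ω,
        (∏ j, kern w (if j = i then ((0:ℝ),(1:ℝ)) else (1,0)) (x j) (y j)) * f y)
        = ∑ y, w y * f (Function.update x i y) from Kop_avg i f x]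

lemma exp_sum_eq (hw1 : (∑ x, w x) = 1) (t : ℝ) (s : Finset (Fin n)) (f : (Fin n → Ω) → ℝ)
    (x : Fin n → Ω) :
    (NormedSpace.exp (∑ i ∈ s, t • Lclm w i)) f x
      = Kop w (fun i => if i ∈ s then (Real.exp (-t), 1 - Real.exp (-t)) else (1, 0)) f x := by
  classical
  induction s using Finset.induction_on generalizing f x with
  | empty => simp [NormedSpace.exp_zero, Kop_id f x]
  | @insert j s' hjs ih =>
    rw [Finset.sum_insert hjs]
    have hcomm : Commute (t • Lclm w j) (∑ i ∈ s', t • Lclm w i) :=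
      Commute.sum_right _ _ _ fun i _ => ((Lclm_commute j i).smul_left t).smul_right t
    rw [NormedSpace.exp_add_of_commute_of_mem_ball (𝕂 := ℝ) hcomm
      ((NormedSpace.expSeries_radius_eq_top ℝ (((Fin n → Ω) → ℝ) →L[ℝ] ((Fin n → Ω) → ℝ))).symm ▸
        edist_lt_top _ _)
      ((NormedSpace.expSeries_radius_eq_top ℝ (((Fin n → Ω) → ℝ) →L[ℝ] ((Fin n → Ω) → ℝ))).symm ▸
        edist_lt_top _ _)]
    have hIH : (NormedSpace.exp (∑ i ∈ s', t • Lclm w i)) f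
        = Kop w (fun i => if i ∈ s' then (Real.exp (-t), 1 - Real.exp (-t)) else (1, 0)) f :=
      funext fun z => ih f z
    rw [ContinuousLinearMap.mul_apply]
    rw [exp_single hw1 t j, hIH]
    set c' : Fin n → ℝ × ℝ := fun i => if i ∈ s' then (Real.exp (-t), 1 - Real.exp (-t)) else (1, 0)
    have hlhs : (1 + (1 - Real.exp (-t)) • Lclm w j) (Kop w c' f) x
        = Real.exp (-t) * Kop w c' f x
          + (1 - Real.exp (-t)) * ∑ y, w y * Kop w c' f (Function.update x j y) := by
      rw [ContinuousLinearMap.add_apply, ContinuousLinearMap.one_apply,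
        ContinuousLinearMap.smul_apply]
      have : (Lclm w j) (Kop w c' f) x
          = (∑ y, w y * Kop w c' f (Function.update x j y)) - Kop w c' f x := rfl
      rw [Pi.add_apply, Pi.smul_apply, this]
      simp only [smul_eq_mul]
      ring
    rw [hlhs, ← Kop_single j (Real.exp (-t)) (1 - Real.exp (-t)) (Kop w c' f) x,
      Kop_comp hw1]
    congr 1
    funext i
    by_cases hij : i = j
    · subst hij
      simp only [if_pos rfl, Finset.mem_insert, true_or, if_pos, c']
      rw [if_neg hjs]
      simp [Kmul]
    · rw [if_neg hij]
      by_cases his : i ∈ s'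
      · simp only [c', if_pos his, Finset.mem_insert, hij, false_or, his, if_true]
        simp [Kmul]
      · simp only [c', if_neg his, Finset.mem_insert, hij, false_or, his, if_false]
        simp [Kmul]

lemma Psemi_eq_Kop (hw1 : (∑ x, w x) = 1) (t : ℝ) (f : (Fin n → Ω) → ℝ) (x : Fin n → Ω) :
    Psemi w n t f x = Kop w (fun _ => (Real.exp (-t), 1 - Real.exp (-t))) f x := by
  have hL : t • (LinearMap.toContinuousLinearMap (Ltot w n)) = ∑ i : Fin n, t • Lclm w i := by
    rw [Ltot, map_sum, Finset.smul_sum]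
    rfl
  show (NormedSpace.exp (t • (LinearMap.toContinuousLinearMap (Ltot w n)))) f x = _
  rw [hL, exp_sum_eq hw1 t Finset.univ f x]
  congr 1
  funext i
  simp

lemma nrm2sq_eq_inn (f : (Fin n → Ω) → ℝ) : nrm2sq w f = inn w f f := by
  simp [nrm2sq, inn, sq]

lemma inn_sum_left {α : Type*} (s : Finset α) (F : α → (Fin n → Ω) → ℝ) (g : (Fin n → Ω) → ℝ) :
    inn w (fun x => ∑ a ∈ s, F a x) g = ∑ a ∈ s, inn w (F a) g := by
  simp only [inn, Finset.sum_mul, Finset.mul_sum]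
  rw [Finset.sum_comm]

lemma inn_sum_right {α : Type*} (s : Finset α) (F : α → (Fin n → Ω) → ℝ) (g : (Fin n → Ω) → ℝ) :
    inn w g (fun x => ∑ a ∈ s, F a x) = ∑ a ∈ s, inn w g (F a) := by
  simp only [inn, Finset.sum_mul, Finset.mul_sum]
  rw [Finset.sum_comm]

lemma inn_smul_left (r : ℝ) (f g : (Fin n → Ω) → ℝ) :
    inn w (fun x => r * f x) g = r * inn w f g := by
  simp only [inn, Finset.mul_sum]
  exact Finset.sum_congr rfl fun x _ => by ring

lemma inn_smul_right (r : ℝ) (f g : (Fin n → Ω) → ℝ) :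
    inn w g (fun x => r * f x) = r * inn w g f := by
  simp only [inn, Finset.mul_sum]
  exact Finset.sum_congr rfl fun x _ => by ring

/-- orthogonality of the projections `F_T` -/
lemma FT_orth (hw1 : (∑ x, w x) = 1) {T T' : Finset (Fin n)} (hTT : T ≠ T')
    (f g : (Fin n → Ω) → ℝ) :
    inn w (Kop w (cF T) f) (Kop w (cF T') g) = 0 := by
  classical
  rw [Kop_selfadj]
  have hdiff : ∃ j, (j ∈ T ∧ j ∉ T') ∨ (j ∉ T ∧ j ∈ T') := by
    by_contra h
    push_neg at h
    exact hTT (Finset.ext fun j => by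
      have := h j
      tauto)
  obtain ⟨j, hj⟩ := hdiff
  have hz : ∀ x, Kop w (cF T) (Kop w (cF T') g) x = 0 := by
    intro x
    rw [Kop_comp hw1]
    refine Kop_zero (j := j) ?_ _ _
    rcases hj with ⟨h1, h2⟩ | ⟨h1, h2⟩
    · simp [cF, h1, h2, Kmul]
    · simp [cF, h1, h2, Kmul]
  simp only [inn]
  refine Finset.sum_eq_zero fun x _ => ?_
  rw [hz x, mul_zero, mul_zero]

/-- action of `F_T` on `L_i f` -/
lemma FT_Lcoord (hw1 : (∑ x, w x) = 1) (T : Finset (Fin n)) (i : Fin n)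
    (f : (Fin n → Ω) → ℝ) (x : Fin n → Ω) :
    Kop w (cF T) (Lcoord w i f) x
      = if i ∈ T then -(Kop w (cF T) f x) else 0 := by
  classical
  have hLf : Lcoord w i f = fun y =>
      Kop w (fun j => if j = i then (0,1) else (1,0)) f y - f y := by
    funext y
    rw [Kop_avg i f y]
    rfl
  rw [hLf, Kop_sub, Kop_comp hw1]
  by_cases hiT : i ∈ T
  · rw [if_pos hiT]
    rw [Kop_zero (j := i) (by simp [cF, hiT, Kmul]) f x]
    ring
  · rw [if_neg hiT]
    have hcoef : (fun j => Kmul (cF T j) (if j = i then ((0:ℝ),(1:ℝ)) else (1,0))) = cF T := by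
      funext j
      by_cases hji : j = i
      · subst hji
        simp [cF, hiT, Kmul]
      · by_cases hjT : j ∈ T <;> simp [cF, hjT, hji, Kmul]
    rw [hcoef]
    ring

/-- action of the semigroup on `F_T` -/
lemma Psemi_FT (hw1 : (∑ x, w x) = 1) (t : ℝ) (T : Finset (Fin n))
    (f : (Fin n → Ω) → ℝ) (x : Fin n → Ω) :
    Psemi w n t (Kop w (cF T) f) x = Real.exp (-t) ^ T.card * Kop w (cF T) f x := by
  classical
  rw [Psemi_eq_Kop hw1, Kop_comp hw1]
  have := Kop_scale (w := w)
    (fun i => Kmul (Real.exp (-t), 1 - Real.exp (-t)) (cF T i)) (cF T)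
    (fun i => if i ∈ T then Real.exp (-t) else 1) ?_ f x
  · rw [this]
    congr 1
    rw [Finset.prod_ite_mem, Finset.univ_inter, Finset.prod_const]
  · intro i
    by_cases hiT : i ∈ T <;>
      simp [cF, hiT, Kmul, Prod.ext_iff] <;> ring

/-- expansion of the squared norm of a combination of the orthogonal pieces -/
lemma nrm2sq_sum_FT (hw1 : (∑ x, w x) = 1) (A : Finset (Finset (Fin n)))
    (β : Finset (Fin n) → ℝ) (f : (Fin n → Ω) → ℝ) :
    nrm2sq w (fun x => ∑ T ∈ A, β T * Kop w (cF T) f x)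
      = ∑ T ∈ A, (β T)^2 * nrm2sq w (Kop w (cF T) f) := by
  classical
  rw [nrm2sq_eq_inn, inn_sum_left]
  refine Finset.sum_congr rfl fun T hT => ?_
  rw [inn_smul_left, inn_sum_right]
  rw [Finset.sum_congr rfl fun T' _ =>
    inn_smul_right (β T') (Kop w (cF T') f) (Kop w (cF T) f)]
  rw [Finset.sum_eq_single T
    (fun T' _ hne => by rw [FT_orth hw1 (Ne.symm hne) f f, mul_zero])
    (fun h => absurd hT h)]
  rw [nrm2sq_eq_inn]
  ring

lemma nrm2sq_nonneg (hw0 : ∀ x, 0 < w x) (f : (Fin n → Ω) → ℝ) : 0 ≤ nrm2sq w f := by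
  refine Finset.sum_nonneg fun x _ => mul_nonneg ?_ (sq_nonneg _)
  exact le_of_lt (Finset.prod_pos fun i _ => hw0 _)

lemma prodWeight_pos (hw0 : ∀ x, 0 < w x) (x : Fin n → Ω) : 0 < prodWeight w x :=
  Finset.prod_pos fun i _ => hw0 _

/-- `L_i f` as a combination of the orthogonal pieces -/
lemma Lcoord_decomp (hw1 : (∑ x, w x) = 1) (i : Fin n) (f : (Fin n → Ω) → ℝ)
    (x : Fin n → Ω) :
    Lcoord w i f x = ∑ T ∈ (Finset.univ : Finset (Fin n)).powerset.filter (fun T => i ∈ T),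
      (-1 : ℝ) * Kop w (cF T) f x := by
  classical
  conv_lhs => rw [← Kop_decomp (w := w) (Lcoord w i f) x]
  rw [Finset.sum_congr rfl fun T _ => FT_Lcoord hw1 T i f x]
  rw [Finset.sum_ite, Finset.sum_const_zero, add_zero]
  exact Finset.sum_congr rfl fun T _ => by ring

/-- the kernel operators give junta functions -/
lemma Kop_junta (c : Fin n → ℝ × ℝ) (S : Finset (Fin n)) (hc : ∀ i ∉ S, c i = (0,1))
    (f : (Fin n → Ω) → ℝ) (x y : Fin n → Ω) (hxy : ∀ i ∈ S, x i = y i) :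
    Kop w c f x = Kop w c f y := by
  classical
  refine Finset.sum_congr rfl fun z _ => ?_
  congr 1
  refine Finset.prod_congr rfl fun i _ => ?_
  by_cases hiS : i ∈ S
  · rw [hxy i hiS]
  · rw [hc i hiS]
    simp [kern]

lemma nrm2sq_Lcoord_eq (hw1 : (∑ x, w x) = 1) (i : Fin n) (f : (Fin n → Ω) → ℝ) :
    nrm2sq w (Lcoord w i f)
      = ∑ T ∈ (Finset.univ : Finset (Fin n)).powerset.filter (fun T => i ∈ T),
          nrm2sq w (Kop w (cF T) f) := by
  classical
  have h1 : nrm2sq w (Lcoord w i f)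
      = nrm2sq w (fun x => ∑ T ∈ (Finset.univ : Finset (Fin n)).powerset.filter
          (fun T => i ∈ T), (-1 : ℝ) * Kop w (cF T) f x) := by
    congr 1
    funext x
    exact Lcoord_decomp hw1 i f x
  rw [h1, nrm2sq_sum_FT hw1]
  exact Finset.sum_congr rfl fun T _ => by ring

lemma nrm2sq_Psemi_Lcoord (hw1 : (∑ x, w x) = 1) (t : ℝ) (i : Fin n)
    (f : (Fin n → Ω) → ℝ) :
    nrm2sq w (Psemi w n t (Lcoord w i f))
      = ∑ T ∈ (Finset.univ : Finset (Fin n)).powerset.filter (fun T => i ∈ T),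
          (Real.exp (-t) ^ T.card)^2 * nrm2sq w (Kop w (cF T) f) := by
  classical
  set filt := (Finset.univ : Finset (Fin n)).powerset.filter (fun T => i ∈ T) with hfilt
  have hdecomp : Lcoord w i f = ∑ T ∈ filt, (-1 : ℝ) • Kop w (cF T) f := by
    funext x
    rw [Finset.sum_apply]
    rw [Lcoord_decomp hw1 i f x]
    exact Finset.sum_congr rfl fun T _ => by simp

  have hPs : Psemi w n t (Lcoord w i f)
      = fun x => ∑ T ∈ filt, (-(Real.exp (-t) ^ T.card)) * Kop w (cF T) f x := by
    funext x
    show (NormedSpace.exp (t • (LinearMap.toContinuousLinearMap (Ltot w n))))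
      (Lcoord w i f) x = _
    rw [hdecomp, map_sum, Finset.sum_apply]
    refine Finset.sum_congr rfl fun T _ => ?_
    rw [map_smul, Pi.smul_apply]
    have : (NormedSpace.exp (t • (LinearMap.toContinuousLinearMap (Ltot w n))))
        (Kop w (cF T) f) x = Real.exp (-t) ^ T.card * Kop w (cF T) f x :=
      Psemi_FT hw1 t T f x
    rw [this]
    simp only [smul_eq_mul]
    ring
  rw [hPs, nrm2sq_sum_FT hw1]
  exact Finset.sum_congr rfl fun T _ => by rw [neg_sq]

lemma influence_nonneg (hw0 : ∀ x, 0 < w x) (i : Fin n) (f : (Fin n → Ω) → ℝ) :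
    0 ≤ influence w i f :=
  Finset.sum_nonneg fun x _ => mul_nonneg (le_of_lt (prodWeight_pos hw0 x)) (abs_nonneg _)

lemma nrm2sq_Lcoord_le (hw0 : ∀ x, 0 < w x) {i : Fin n} {f : (Fin n → Ω) → ℝ}
    (hLip : ∀ x, |Lcoord w i f x| ≤ 1) :
    nrm2sq w (Lcoord w i f) ≤ influence w i f := by
  refine Finset.sum_le_sum fun x _ => ?_
  refine mul_le_mul_of_nonneg_left ?_ (le_of_lt (prodWeight_pos hw0 x))
  rw [← sq_abs]
  calc |Lcoord w i f x| ^ 2 ≤ |Lcoord w i f x| ^ 1 :=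
        pow_le_pow_of_le_one (abs_nonneg _) (hLip x) one_le_two
    _ = |Lcoord w i f x| := pow_one _

/-- the total spectral mass weighted by degree is at most the total influence -/
lemma degree_mass_le (hw0 : ∀ x, 0 < w x) (hw1 : (∑ x, w x) = 1) (f : (Fin n → Ω) → ℝ)
    (hLip : ∀ i : Fin n, ∀ x, |Lcoord w i f x| ≤ 1) :
    ∑ T ∈ (Finset.univ : Finset (Fin n)).powerset,
        (T.card : ℝ) * nrm2sq w (Kop w (cF T) f) ≤ ∑ i : Fin n, influence w i f := by
  classical
  have key : ∀ T : Finset (Fin n),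
      (T.card : ℝ) * nrm2sq w (Kop w (cF T) f)
        = ∑ i : Fin n, (if i ∈ T then nrm2sq w (Kop w (cF T) f) else 0) := by
    intro T
    rw [Finset.sum_ite_mem, Finset.univ_inter, Finset.sum_const, nsmul_eq_mul]
  rw [Finset.sum_congr rfl fun T _ => key T, Finset.sum_comm]
  refine Finset.sum_le_sum fun i _ => ?_
  rw [← Finset.sum_filter, ← nrm2sq_Lcoord_eq hw1]
  exact nrm2sq_Lcoord_le hw0 (hLip i)

/-- **Main estimate.** -/
lemma main_bound (hw0 : ∀ x, 0 < w x) (hw1 : (∑ x, w x) = 1) (f : (Fin n → Ω) → ℝ)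
    (hLip : ∀ i : Fin n, ∀ x, |Lcoord w i f x| ≤ 1)
    (t k : ℝ) (ht : 0 ≤ t) (hk : 0 < k) (S : Finset (Fin n)) (τ13 : ℝ) (hτ13 : 0 ≤ τ13)
    (hhyp2 : ∀ i, i ∉ S → nrm2sq w (Psemi w n t (Lcoord w i f)) ≤ τ13 * influence w i f) :
    nrm2sq w (fun x => f x - (∑ T ∈ (Finset.univ : Finset (Fin n)).powerset.filter
          (fun T => T ⊆ S), Kop w (cF T) f x))
      ≤ Real.exp (2*t*k) * τ13 * (∑ i : Fin n, influence w i f)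
          + (∑ i : Fin n, influence w i f) / k := by
  classical
  set 𝒯 := (Finset.univ : Finset (Fin n)).powerset with h𝒯
  set u : Finset (Fin n) → ℝ := fun T => nrm2sq w (Kop w (cF T) f) with hu
  have hu0 : ∀ T, 0 ≤ u T := fun T => nrm2sq_nonneg hw0 _
  set Itot := ∑ i : Fin n, influence w i f with hItot
  set bad := 𝒯.filter (fun T => ¬ T ⊆ S) with hbad
  -- step 1 : the difference is the sum over bad sets
  have hdiff : nrm2sq w (fun x => f x - (∑ T ∈ 𝒯.filter (fun T => T ⊆ S), Kop w (cF T) f x))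
      = ∑ T ∈ bad, u T := by
    have hfg : (fun x => f x - (∑ T ∈ 𝒯.filter (fun T => T ⊆ S), Kop w (cF T) f x))
        = fun x => ∑ T ∈ bad, (1:ℝ) * Kop w (cF T) f x := by
      funext x
      have hsplit := Finset.sum_filter_add_sum_filter_not 𝒯 (fun T => T ⊆ S)
        (fun T => Kop w (cF T) f x)
      have hdec := Kop_decomp (w := w) f x
      simp only [one_mul]
      rw [← hdec]
      linarith [hsplit]
    rw [hfg, nrm2sq_sum_FT hw1]
    exact Finset.sum_congr rfl fun T _ => by ring
  rw [hdiff]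
  -- split into small and large degree parts
  rw [← Finset.sum_filter_add_sum_filter_not bad (fun T => (T.card : ℝ) ≤ k) u]
  have hlarge : ∑ T ∈ bad.filter (fun T => ¬ (T.card : ℝ) ≤ k), u T ≤ Itot / k := by
    have h1 : ∀ T ∈ bad.filter (fun T => ¬ (T.card : ℝ) ≤ k),
        u T ≤ (1/k) * ((T.card : ℝ) * u T) := by
      intro T hT
      have hcard : k ≤ (T.card : ℝ) :=
        le_of_lt (lt_of_not_ge (Finset.mem_filter.mp hT).2)
      rw [one_div, ← mul_assoc]
      nth_rewrite 1 [← one_mul (u T)]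
      refine mul_le_mul_of_nonneg_right ?_ (hu0 T)
      rw [inv_mul_eq_div, le_div_iff₀ hk]
      linarith
    refine le_trans (Finset.sum_le_sum h1) ?_
    rw [← Finset.mul_sum]
    have h2 : ∑ T ∈ bad.filter (fun T => ¬ (T.card : ℝ) ≤ k), (T.card : ℝ) * u T
        ≤ Itot := by
      refine le_trans (Finset.sum_le_sum_of_subset_of_nonneg
        (le_trans (Finset.filter_subset _ _) (Finset.filter_subset _ _))
        (fun T _ _ => mul_nonneg (Nat.cast_nonneg _) (hu0 T))) ?_
      exact degree_mass_le hw0 hw1 f hLip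
    calc (1/k) * ∑ T ∈ bad.filter (fun T => ¬ (T.card : ℝ) ≤ k), (T.card : ℝ) * u T
        ≤ (1/k) * Itot := by
          refine mul_le_mul_of_nonneg_left h2 ?_
          positivity
      _ = Itot / k := by ring
  have hsmall : ∑ T ∈ bad.filter (fun T => (T.card : ℝ) ≤ k), u T
      ≤ Real.exp (2*t*k) * τ13 * Itot := by
    set small := bad.filter (fun T => (T.card : ℝ) ≤ k) with hsmalldef
    have hA : ∀ T ∈ small, u T ≤ ∑ i ∈ Finset.univ \ S, (if i ∈ T then u T else 0) := by
      intro T hT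
      rw [Finset.sum_ite_mem]
      have hTbad : T ∈ bad := Finset.mem_filter.mp hT |>.1
      have hnsub : ¬ T ⊆ S := (Finset.mem_filter.mp hTbad).2
      obtain ⟨j, hjT, hjS⟩ := Finset.not_subset.mp hnsub
      have hjmem : j ∈ (Finset.univ \ S) ∩ T :=
        Finset.mem_inter.mpr ⟨Finset.mem_sdiff.mpr ⟨Finset.mem_univ _, hjS⟩, hjT⟩
      rw [Finset.sum_const, nsmul_eq_mul]
      nth_rewrite 1 [← one_mul (u T)]
      refine mul_le_mul_of_nonneg_right ?_ (hu0 T)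
      have : 1 ≤ ((Finset.univ \ S) ∩ T).card := Finset.card_pos.mpr ⟨j, hjmem⟩
      exact_mod_cast this
    have hB : ∑ T ∈ small, u T
        ≤ ∑ i ∈ Finset.univ \ S, ∑ T ∈ small.filter (fun T => i ∈ T), u T := by
      refine le_trans (Finset.sum_le_sum hA) ?_
      rw [Finset.sum_comm]
      exact le_of_eq (Finset.sum_congr rfl fun i _ => (Finset.sum_filter _ _).symm)
    have hC : ∀ i ∈ Finset.univ \ S,
        ∑ T ∈ small.filter (fun T => i ∈ T), u T
          ≤ Real.exp (2*t*k) * (τ13 * influence w i f) := by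
      intro i hi
      have hiS : i ∉ S := (Finset.mem_sdiff.mp hi).2
      have hterm : ∀ T ∈ small.filter (fun T => i ∈ T),
          u T ≤ Real.exp (2*t*k) * ((Real.exp (-t) ^ T.card)^2 * u T) := by
        intro T hT
        have hcard : (T.card : ℝ) ≤ k :=
          (Finset.mem_filter.mp ((Finset.mem_filter.mp hT).1)).2
        have hexp : (1:ℝ) ≤ Real.exp (2*t*k) * (Real.exp (-t) ^ T.card)^2 := by
          have h1 : (Real.exp (-t)) ^ T.card = Real.exp ((T.card : ℝ) * (-t)) :=
            (Real.exp_nat_mul _ _).symm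
          rw [h1, sq, ← Real.exp_add, ← Real.exp_add]
          have := mul_nonneg ht (sub_nonneg.mpr hcard)
          refine Real.one_le_exp ?_
          nlinarith
        calc u T = 1 * u T := (one_mul _).symm
          _ ≤ (Real.exp (2*t*k) * (Real.exp (-t) ^ T.card)^2) * u T :=
              mul_le_mul_of_nonneg_right hexp (hu0 T)
          _ = Real.exp (2*t*k) * ((Real.exp (-t) ^ T.card)^2 * u T) := by ring
      refine le_trans (Finset.sum_le_sum hterm) ?_
      rw [← Finset.mul_sum]
      refine mul_le_mul_of_nonneg_left ?_ (le_of_lt (Real.exp_pos _))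
      refine le_trans ?_ (le_trans (le_of_eq (nrm2sq_Psemi_Lcoord hw1 t i f).symm)
        (hhyp2 i hiS))
      refine Finset.sum_le_sum_of_subset_of_nonneg ?_
        (fun T _ _ => mul_nonneg (sq_nonneg _) (hu0 T))
      intro T hT
      have h1 := Finset.mem_filter.mp hT
      have h2 := Finset.mem_filter.mp (Finset.mem_filter.mp h1.1).1
      exact Finset.mem_filter.mpr ⟨h2.1, h1.2⟩
    have hD : ∑ i ∈ Finset.univ \ S, Real.exp (2*t*k) * (τ13 * influence w i f)
        ≤ Real.exp (2*t*k) * τ13 * Itot := by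
      have : ∑ i ∈ Finset.univ \ S, influence w i f ≤ Itot :=
        Finset.sum_le_sum_of_subset_of_nonneg (Finset.sdiff_subset)
          (fun i _ _ => influence_nonneg hw0 i f)
      calc ∑ i ∈ Finset.univ \ S, Real.exp (2*t*k) * (τ13 * influence w i f)
          = Real.exp (2*t*k) * τ13 * ∑ i ∈ Finset.univ \ S, influence w i f := by
            rw [Finset.mul_sum]
            exact Finset.sum_congr rfl fun i _ => by ring
        _ ≤ Real.exp (2*t*k) * τ13 * Itot := by
            refine mul_le_mul_of_nonneg_left this ?_
            positivity
    exact le_trans hB (le_trans (Finset.sum_le_sum hC) hD)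
  exact add_le_add hsmall hlarge

end basic

/-- There exists a universal constant `C > 0` with the following property.
Let `Ω` be a finite set with full-support probability measure `μ`, and assume the product
semigroup `(P_t)` on `Ωⁿ` is hypercontractive with constant `ρ ∈ (0,1]`. Then for every
`ε ∈ (0,1)` and every `f : Ωⁿ → ℝ` with `max_{1≤i≤n} ‖L_i f‖_∞ ≤ 1` and total influence
`I(f) ≥ 1`, there exists a function `g : Ωⁿ → ℝ` depending on at most
`exp(C·I(f)·(1 + |log(ε ρ)|)/(ρ ε²))` coordinates such that `‖f − g‖_{L²(μ^{⊗n})} ≤ ε`. -/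
theorem stmt2 :
    ∃ C : ℝ, 0 < C ∧
      ∀ (Ω : Type) (_ : Fintype Ω) (n : ℕ)
        (w : Ω → ℝ), (∀ x, 0 < w x) → (∑ x, w x) = 1 →
        ∀ ρ : ℝ, 0 < ρ → ρ ≤ 1 →
        (∀ s : ℝ, 0 < s → ∀ g : (Fin n → Ω) → ℝ,
          Real.sqrt (nrm2sq w (Psemi w n s g)) ≤ nrmp w (1 + Real.exp (-2 * ρ * s)) g) →
        ∀ ε : ℝ, 0 < ε → ε < 1 →
        ∀ f : (Fin n → Ω) → ℝ, (∀ i : Fin n, ∀ x, |Lcoord w i f x| ≤ 1) →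
        1 ≤ ∑ i : Fin n, influence w i f →
        ∃ g : (Fin n → Ω) → ℝ, ∃ S : Finset (Fin n),
          (S.card : ℝ) ≤ Real.exp (C * (∑ i : Fin n, influence w i f) *
              (1 + |Real.log (ε * ρ)|) / (ρ * ε ^ 2)) ∧
          (∀ x y : Fin n → Ω, (∀ i ∈ S, x i = y i) → g x = g y) ∧
          Real.sqrt (nrm2sq w (fun x => f x - g x)) ≤ ε := by
  classical
  refine ⟨100, by norm_num, ?_⟩
  intro Ω instΩ n w hw0 hw1 ρ hρ0 hρ1 hhc ε hε0 hε1 f hLip hInf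
  set Itot := ∑ i : Fin n, influence w i f with hItotdef
  have hItot1 : (1:ℝ) ≤ Itot := hInf
  have hItot0 : (0:ℝ) < Itot := lt_of_lt_of_le one_pos hItot1
  set t : ℝ := Real.log 2 / (2 * ρ) with htdef
  have ht0 : 0 < t := div_pos (Real.log_pos one_lt_two) (by linarith)
  set k : ℝ := 2 * Itot / ε ^ 2 with hkdef
  have hk0 : 0 < k := div_pos (by linarith) (by positivity)
  set τ13 : ℝ := ε ^ 2 / (2 * Itot) * Real.exp (-(2 * t * k)) with hτ13def
  have hτ13pos : 0 < τ13 := by positivity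
  set τ : ℝ := τ13 ^ 3 with hτdef
  have hτpos : 0 < τ := by positivity
  have hτ13eq : τ ^ ((1:ℝ)/3) = τ13 := by
    rw [hτdef, ← Real.rpow_natCast τ13 3, ← Real.rpow_mul (le_of_lt hτ13pos)]
    norm_num
  set S : Finset (Fin n) := Finset.univ.filter (fun i => τ ≤ influence w i f) with hSdef
  set g : (Fin n → Ω) → ℝ := fun x =>
    ∑ T ∈ (Finset.univ : Finset (Fin n)).powerset.filter (fun T => T ⊆ S),
      Kop w (cF T) f x with hgdef
  refine ⟨g, S, ?_, ?_, ?_⟩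
  · -- cardinality bound
    have hcard1 : (S.card : ℝ) ≤ Itot / τ := by
      rw [le_div_iff₀ hτpos]
      calc (S.card : ℝ) * τ = ∑ _i ∈ S, τ := by
            rw [Finset.sum_const, nsmul_eq_mul]
        _ ≤ ∑ i ∈ S, influence w i f :=
            Finset.sum_le_sum fun i hi => (Finset.mem_filter.mp hi).2
        _ ≤ Itot := Finset.sum_le_sum_of_subset_of_nonneg (Finset.subset_univ S)
            (fun i _ _ => influence_nonneg hw0 i f)
    set E : ℝ := Itot / (ρ * ε ^ 2) with hEdef
    have hEpos : 0 < E := by positivity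
    have hεsq : ε ^ 2 ≤ 1 := by nlinarith
    have hρε : ρ * ε ^ 2 ≤ 1 := by nlinarith
    have hE1 : Itot ≤ E := by
      rw [hEdef, le_div_iff₀ (by positivity)]
      nlinarith
    have hE2 : 2 * Itot / ε ^ 2 ≤ 2 * E := by
      rw [hEdef, div_le_iff₀ (by positivity : (0:ℝ) < ε ^ 2)]
      rw [show 2 * (Itot / (ρ * ε ^ 2)) * ε ^ 2 = 2 * Itot / ρ from by field_simp]
      rw [le_div_iff₀ hρ0]
      nlinarith
    have hτval : τ = (ε^2/(2*Itot))^3 * Real.exp (-(6*t*k)) := by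
      rw [hτdef, hτ13def, mul_pow]
      congr 1
      rw [← Real.exp_nat_mul]
      congr 1
      push_cast
      ring
    have hee6 : Real.exp (6*t*k) * Real.exp (-(6*t*k)) = 1 := by
      rw [← Real.exp_add, add_neg_cancel, Real.exp_zero]
    have hIτ : Itot / τ = Itot * (2*Itot/ε^2)^3 * Real.exp (6*t*k) := by
      rw [div_eq_iff (ne_of_gt hτpos)]
      symm
      calc Itot * (2*Itot/ε^2)^3 * Real.exp (6*t*k) * τ
          = Itot * ((2*Itot/ε^2) * (ε^2/(2*Itot)))^3 *
              (Real.exp (6*t*k) * Real.exp (-(6*t*k))) := by rw [hτval]; ring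
        _ = Itot := by
            rw [hee6, show (2*Itot/ε^2) * (ε^2/(2*Itot)) = 1 from by field_simp]
            norm_num
    have h6tk : 6 * t * k ≤ 6 * E := by
      rw [htdef, hkdef]
      have hlog2 : Real.log 2 ≤ 1 := by
        have := Real.log_le_sub_one_of_pos (by norm_num : (0:ℝ) < 2)
        linarith
      have hlog2' : 0 < Real.log 2 := Real.log_pos one_lt_two
      rw [hEdef]
      rw [show 6 * (Real.log 2 / (2 * ρ)) * (2 * Itot / ε ^ 2)
          = 6 * Real.log 2 * (Itot / (ρ * ε^2)) from by field_simp]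
      have : 6 * Real.log 2 ≤ 6 := by linarith
      nlinarith [hEpos]
    have hbound : Itot / τ ≤ Real.exp (13 * E) := by
      rw [hIτ]
      have b1 : Itot ≤ Real.exp E := by
        refine le_trans hE1 ?_
        linarith [Real.add_one_le_exp E]
      have b2 : (2*Itot/ε^2)^3 ≤ Real.exp (6 * E) := by
        calc (2*Itot/ε^2)^3 ≤ (2*E)^3 := by
              refine pow_le_pow_left₀ (by positivity) hE2 3
          _ ≤ (Real.exp (2*E))^3 := by
              refine pow_le_pow_left₀ (by positivity) ?_ 3
              linarith [Real.add_one_le_exp (2*E)]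
          _ = Real.exp (6 * E) := by
              rw [← Real.exp_nat_mul]
              congr 1
              push_cast
              ring
      have b3 : Real.exp (6*t*k) ≤ Real.exp (6*E) := Real.exp_le_exp.mpr h6tk
      calc Itot * (2*Itot/ε^2)^3 * Real.exp (6*t*k)
          ≤ Real.exp E * Real.exp (6*E) * Real.exp (6*E) := by
            refine mul_le_mul (mul_le_mul b1 b2 (by positivity) (by positivity)) b3
              (by positivity) (by positivity)
        _ = Real.exp (13 * E) := by
            rw [← Real.exp_add, ← Real.exp_add]
            congr 1
            ring
    refine le_trans hcard1 (le_trans hbound ?_)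
    rw [Real.exp_le_exp]
    have habs : (0:ℝ) ≤ |Real.log (ε * ρ)| := abs_nonneg _
    rw [show (100:ℝ) * Itot * (1 + |Real.log (ε * ρ)|) / (ρ * ε ^ 2)
        = (Itot / (ρ * ε ^ 2)) * (100 * (1 + |Real.log (ε * ρ)|)) from by ring]
    rw [hEdef, show (13:ℝ) * (Itot / (ρ * ε ^ 2)) = (Itot / (ρ * ε ^ 2)) * 13 from by ring]
    refine mul_le_mul_of_nonneg_left ?_ (by positivity)
    linarith
  · -- junta property
    intro x y hxy
    refine Finset.sum_congr rfl fun T hT => ?_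
    have hTS : T ⊆ S := (Finset.mem_filter.mp hT).2
    refine Kop_junta (cF T) S ?_ f x y hxy
    intro i hiS
    have hiT : i ∉ T := fun h => hiS (hTS h)
    simp [cF, hiT]
  · -- distance bound
    have hhyp2 : ∀ i, i ∉ S → nrm2sq w (Psemi w n t (Lcoord w i f))
        ≤ τ13 * influence w i f := by
      intro i hiS
      have hIi0 : 0 ≤ influence w i f := influence_nonneg hw0 i f
      have hIiτ : influence w i f ≤ τ := by
        by_contra h
        exact hiS (Finset.mem_filter.mpr ⟨Finset.mem_univ i, le_of_lt (lt_of_not_ge h)⟩)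
      have hexpt : Real.exp (-2 * ρ * t) = 1/2 := by
        rw [show (-2 : ℝ) * ρ * t = -Real.log 2 from by rw [htdef]; field_simp]
        rw [Real.exp_neg, Real.exp_log (by norm_num : (0:ℝ) < 2)]
        norm_num
      have hhct := hhc t ht0 (Lcoord w i f)
      rw [hexpt] at hhct
      -- bound the (3/2)-norm by the influence
      have hbase : ∑ x, prodWeight w x * |Lcoord w i f x| ^ ((1:ℝ)+1/2)
          ≤ influence w i f := by
        refine Finset.sum_le_sum fun x _ => ?_
        refine mul_le_mul_of_nonneg_left ?_ (le_of_lt (prodWeight_pos hw0 x))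
        rcases eq_or_lt_of_le (abs_nonneg (Lcoord w i f x)) with h0 | h0
        · rw [← h0, Real.zero_rpow (by norm_num : ((1:ℝ)+1/2) ≠ 0)]
        · calc |Lcoord w i f x| ^ ((1:ℝ)+1/2) ≤ |Lcoord w i f x| ^ (1:ℝ) :=
              Real.rpow_le_rpow_of_exponent_ge h0 (hLip i x) (by norm_num)
            _ = |Lcoord w i f x| := Real.rpow_one _
      have hnrm : nrmp w (1 + 1/2) (Lcoord w i f)
          ≤ (influence w i f) ^ ((2:ℝ)/3) := by
        rw [nrmp]
        rw [show (1:ℝ) / (1 + 1/2) = (2:ℝ)/3 from by norm_num]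
        refine Real.rpow_le_rpow ?_ hbase (by norm_num)
        refine Finset.sum_nonneg fun x _ => ?_
        refine mul_nonneg (le_of_lt (prodWeight_pos hw0 x)) ?_
        exact Real.rpow_nonneg (abs_nonneg _) _
      have hs : Real.sqrt (nrm2sq w (Psemi w n t (Lcoord w i f)))
          ≤ (influence w i f) ^ ((2:ℝ)/3) := le_trans hhct hnrm
      have hsq : nrm2sq w (Psemi w n t (Lcoord w i f))
          ≤ ((influence w i f) ^ ((2:ℝ)/3)) ^ 2 := by
        have hnn := nrm2sq_nonneg hw0 (Psemi w n t (Lcoord w i f))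
        nlinarith [Real.sq_sqrt hnn, Real.sqrt_nonneg (nrm2sq w (Psemi w n t (Lcoord w i f)))]
      refine le_trans hsq ?_
      rcases eq_or_lt_of_le hIi0 with hz | hpos
      · rw [← hz, Real.zero_rpow (by norm_num : ((2:ℝ)/3) ≠ 0)]
        norm_num
      · have h43 : ((influence w i f) ^ ((2:ℝ)/3)) ^ 2
            = (influence w i f) ^ ((4:ℝ)/3) := by
          rw [← Real.rpow_natCast ((influence w i f) ^ ((2:ℝ)/3)) 2,
            ← Real.rpow_mul (le_of_lt hpos)]
          norm_num
        rw [h43, show ((4:ℝ)/3) = (1:ℝ)/3 + 1 from by norm_num,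
          Real.rpow_add hpos, Real.rpow_one]
        refine mul_le_mul_of_nonneg_right ?_ hIi0
        rw [← hτ13eq]
        exact Real.rpow_le_rpow hIi0 hIiτ (by norm_num)
    have hmain := main_bound hw0 hw1 f hLip t k (le_of_lt ht0) hk0 S τ13
      (le_of_lt hτ13pos) hhyp2
    have hee : Real.exp (2*t*k) * Real.exp (-(2*t*k)) = 1 := by
      rw [← Real.exp_add, add_neg_cancel, Real.exp_zero]
    have h1 : Real.exp (2*t*k) * τ13 * Itot = ε^2/2 := by
      rw [hτ13def]
      rw [show Real.exp (2*t*k) * (ε ^ 2 / (2 * Itot) * Real.exp (-(2*t*k))) * Itot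
          = (Real.exp (2*t*k) * Real.exp (-(2*t*k))) * (ε^2 / (2*Itot) * Itot) from by ring]
      rw [hee, one_mul]
      field_simp
    have h2 : Itot / k = ε^2/2 := by
      rw [hkdef]
      rw [div_div_eq_mul_div]
      field_simp
    have hfinal : nrm2sq w (fun x => f x - g x) ≤ ε ^ 2 := by
      calc nrm2sq w (fun x => f x - g x)
          ≤ Real.exp (2*t*k) * τ13 * Itot + Itot / k := hmain
        _ = ε ^ 2 := by rw [h1, h2]; ring
    calc Real.sqrt (nrm2sq w (fun x => f x - g x)) ≤ Real.sqrt (ε ^ 2) :=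
        Real.sqrt_le_sqrt hfinal
      _ = ε := by rw [Real.sqrt_sq (le_of_lt hε0)]
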